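/- Almost surely, for every n ≥ 0 the sequence (X_{λ_j − n})_{j≥n} converges as j → ∞; indeed, the intervals [X_{λ_j − n}]^j for j ≥ n form a nested sequence of dyadic intervals whose lengths 2^{-j} tend to zero, so tilde X_{-n} = lim_{j→∞} X_{λ_j − n} is well defined. -/

import Mathlib

open MeasureTheory Filter Topology

noncomputable section

/-- Index of the dyadic cell of level `k` containing `x`:
`x ∈ [i 2^{-k}, (i+1) 2^{-k})` iff `qcell k x = i`. -/
def qcell (k : ℕ) (x : ℝ) : ℤ := ⌊x * 2 ^ k⌋

/-- The dyadic cell of level `k` containing `x`, as a subset of `ℝ`. -/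
def dcell (k : ℕ) (x : ℝ) : Set ℝ :=
  Set.Ico ((qcell k x : ℝ) / 2 ^ k) (((qcell k x : ℝ) + 1) / 2 ^ k)

variable {Ω : Type*}

/-- The stopping times `λ_n`. -/
def lam (X : ℤ → Ω → ℝ) : ℕ → Ω → ℕ
  | 0 => fun _ => 0
  | n + 1 => fun ω =>
      lam X n ω +
        sInf {t : ℕ | 0 < t ∧ ∀ i : ℕ, i ≤ lam X n ω →
          qcell (n + 1) (X ((t : ℤ) + (i : ℤ)) ω) = qcell (n + 1) (X (i : ℤ) ω)}

/-- Almost surely every matching set is nonempty, i.e. all stopping times are finite. -/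
def LamFinite [MeasurableSpace Ω] (μ : Measure Ω) (X : ℤ → Ω → ℝ) : Prop :=
  ∀ᵐ ω ∂μ, ∀ n : ℕ,
    {t : ℕ | 0 < t ∧ ∀ i : ℕ, i ≤ lam X n ω →
      qcell (n + 1) (X ((t : ℤ) + (i : ℤ)) ω) = qcell (n + 1) (X (i : ℤ) ω)}.Nonempty

/-- Stationarity of a two-sided real valued process. -/
def IsStationaryProcess [MeasurableSpace Ω] (μ : Measure Ω) (X : ℤ → Ω → ℝ) : Prop :=
  ∀ k : ℤ, μ.map (fun ω => fun i : ℤ => X (i + k) ω) = μ.map (fun ω => fun i : ℤ => X i ω)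

/-- The estimator `m_n`. -/
def mEst (X : ℤ → Ω → ℝ) (f : ℕ → ℤ → ℝ) (n : ℕ) (ω : Ω) : ℝ :=
  (n : ℝ)⁻¹ * ∑ j ∈ Finset.range n, f j (qcell j (X ((lam X j ω : ℤ) + 1) ω))

/-- The value following the stopping time `λ_n`. -/
def Xnext (X : ℤ → Ω → ℝ) (n : ℕ) (ω : Ω) : ℝ := X ((lam X n ω : ℤ) + 1) ω

/-- The σ-algebra generated by the quantized data segment `[X_0^{λ_n}]^n`. -/
def quantField [MeasurableSpace Ω] (X : ℤ → Ω → ℝ) (n : ℕ) : MeasurableSpace Ω :=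
  MeasurableSpace.comap
    (fun ω => ((lam X n ω, fun i : ℕ => qcell n (X ((min i (lam X n ω) : ℕ) : ℤ) ω)) : ℕ × (ℕ → ℤ)))
    inferInstance

/-- The σ-algebra generated by the data segment `X_0^{λ_n}`. -/
def segField [MeasurableSpace Ω] (X : ℤ → Ω → ℝ) (n : ℕ) : MeasurableSpace Ω :=
  MeasurableSpace.comap
    (fun ω => ((lam X n ω, fun i : ℕ => X ((min i (lam X n ω) : ℕ) : ℤ) ω) : ℕ × (ℕ → ℝ)))
    inferInstance

/-- `tildeX X n ω` is `tilde X_{-n}(ω) = lim_j X_{λ_j - n}(ω)`. -/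
def tildeX (X : ℤ → Ω → ℝ) (n : ℕ) (ω : Ω) : ℝ :=
  limUnder atTop fun j : ℕ => X ((lam X j ω : ℤ) - (n : ℤ)) ω

end

noncomputable section

lemma floor_half (z : ℝ) : ⌊z / 2⌋ = ⌊z⌋ / 2 := by
  have h1 := Int.floor_le z
  have h2 := Int.lt_floor_add_one z
  have ha : (2 * (⌊z⌋ / 2) : ℤ) ≤ ⌊z⌋ := by omega
  have hb : ⌊z⌋ ≤ 2 * (⌊z⌋ / 2) + 1 := by omega
  have ha' : ((2 * (⌊z⌋ / 2) : ℤ) : ℝ) ≤ ⌊z⌋ := by exact_mod_cast ha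
  have hb' : (⌊z⌋ : ℝ) ≤ ((2 * (⌊z⌋ / 2) + 1 : ℤ) : ℝ) := by exact_mod_cast hb
  rw [Int.floor_eq_iff]
  push_cast at ha' hb' ⊢
  constructor <;> linarith

lemma qcell_succ (k : ℕ) (y : ℝ) : qcell k y = qcell (k + 1) y / 2 := by
  unfold qcell
  have : y * 2 ^ k = (y * 2 ^ (k + 1)) / 2 := by ring
  rw [this, floor_half]

lemma mem_dcell_iff (k : ℕ) (x y : ℝ) : y ∈ dcell k x ↔ qcell k y = qcell k x := by
  have h2 : (0 : ℝ) < 2 ^ k := by positivity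
  unfold dcell qcell
  rw [Set.mem_Ico, div_le_iff₀ h2, lt_div_iff₀ h2, Int.floor_eq_iff, and_comm]

lemma self_mem_dcell (k : ℕ) (x : ℝ) : x ∈ dcell k x := (mem_dcell_iff k x x).2 rfl

lemma dcell_succ_subset (k : ℕ) (x : ℝ) : dcell (k + 1) x ⊆ dcell k x := by
  intro y hy
  rw [mem_dcell_iff] at hy ⊢
  rw [qcell_succ k y, qcell_succ k x, hy]

lemma dist_le_of_mem_dcell {k : ℕ} {x y z : ℝ} (hy : y ∈ dcell k x) (hz : z ∈ dcell k x) :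
    dist y z ≤ (1 / 2) ^ k := by
  have h2 : (0 : ℝ) < 2 ^ k := by positivity
  obtain ⟨hy1, hy2⟩ := hy
  obtain ⟨hz1, hz2⟩ := hz
  have hlen : ((qcell k x : ℝ) + 1) / 2 ^ k - (qcell k x : ℝ) / 2 ^ k = (1 / 2) ^ k := by
    rw [one_div, inv_pow]
    field_simp
    ring
  rw [Real.dist_eq, abs_le]
  constructor <;> nlinarith

/-- Almost surely, for every `n ≥ 0` the dyadic cells
`[X_{λ_j − n}]^j`, `j ≥ n`, are nested (each of length `2^{-j}` → 0), and the sequence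
`(X_{λ_j − n})_{j ≥ n}` converges as `j → ∞`; in particular
`tilde X_{-n} = lim_j X_{λ_j − n}` is well defined. -/
theorem stmt10 {Ω : Type*} [MeasurableSpace Ω] (μ : Measure Ω) [IsProbabilityMeasure μ]
    (X : ℤ → Ω → ℝ) (hmeas : ∀ i, Measurable (X i))
    (hstat : IsStationaryProcess μ X)
    (hfin : LamFinite μ X) :
    ∀ᵐ ω ∂μ, ∀ n : ℕ,
      (∀ j : ℕ, n ≤ j →
        dcell (j + 1) (X ((lam X (j + 1) ω : ℤ) - (n : ℤ)) ω) ⊆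
          dcell j (X ((lam X j ω : ℤ) - (n : ℤ)) ω)) ∧
      ∃ L : ℝ, Tendsto (fun j : ℕ => X ((lam X j ω : ℤ) - (n : ℤ)) ω) atTop (𝓝 L) := by
  filter_upwards [hfin] with ω hω
  intro n
  -- λ_j ≥ j
  have hlam_ge : ∀ j : ℕ, j ≤ lam X j ω := by
    intro j
    induction j with
    | zero => simp [lam]
    | succ j ih =>
      have hmem := Nat.sInf_mem (hω j)
      have hpos : 0 < sInf {t : ℕ | 0 < t ∧ ∀ i : ℕ, i ≤ lam X j ω →
          qcell (j + 1) (X ((t : ℤ) + (i : ℤ)) ω) = qcell (j + 1) (X (i : ℤ) ω)} := hmem.1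
      show j + 1 ≤ lam X j ω + _
      omega
  -- the key matching identity
  have key : ∀ j : ℕ, n ≤ j →
      qcell (j + 1) (X ((lam X (j + 1) ω : ℤ) - (n : ℤ)) ω) =
        qcell (j + 1) (X ((lam X j ω : ℤ) - (n : ℤ)) ω) := by
    intro j hj
    obtain ⟨hpos, hmatch⟩ := Nat.sInf_mem (hω j)
    set t := sInf {t : ℕ | 0 < t ∧ ∀ i : ℕ, i ≤ lam X j ω →
        qcell (j + 1) (X ((t : ℤ) + (i : ℤ)) ω) = qcell (j + 1) (X (i : ℤ) ω)} with ht
    have hnle : n ≤ lam X j ω := le_trans hj (hlam_ge j)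
    have hm := hmatch (lam X j ω - n) (Nat.sub_le _ _)
    have h2 : (((lam X j ω - n : ℕ)) : ℤ) = (lam X j ω : ℤ) - (n : ℤ) := by
      push_cast [hnle]; ring
    have h1 : ((t : ℤ) + ((lam X j ω - n : ℕ) : ℤ)) = (lam X (j + 1) ω : ℤ) - (n : ℤ) := by
      have hls : lam X (j + 1) ω = lam X j ω + t := rfl
      rw [hls, h2]; push_cast; ring
    rw [h1, h2] at hm
    exact hm
  set y : ℕ → ℝ := fun j => X ((lam X j ω : ℤ) - (n : ℤ)) ω with hy
  have hdcell_eq : ∀ j : ℕ, n ≤ j → dcell (j + 1) (y (j + 1)) = dcell (j + 1) (y j) := by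
    intro j hj
    unfold dcell
    rw [key j hj]
  constructor
  · intro j hj
    calc dcell (j + 1) (y (j + 1)) = dcell (j + 1) (y j) := hdcell_eq j hj
      _ ⊆ dcell j (y j) := dcell_succ_subset j (y j)
  · -- convergence via Cauchy sequence
    have hdist : ∀ j : ℕ, dist (y (j + n)) (y (j + 1 + n)) ≤ 1 * (1 / 2) ^ j := by
      intro j
      have e : j + 1 + n = j + n + 1 := by omega
      rw [e]
      have hj : n ≤ j + n := Nat.le_add_left n j
      have hmem1 : y (j + n) ∈ dcell (j + n + 1) (y (j + n)) := self_mem_dcell _ _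
      have hmem2 : y (j + n + 1) ∈ dcell (j + n + 1) (y (j + n)) := by
        rw [mem_dcell_iff]
        exact key (j + n) hj
      have := dist_le_of_mem_dcell hmem1 hmem2
      have hle : ((1 : ℝ) / 2) ^ (j + n + 1) ≤ (1 / 2) ^ j := by
        apply pow_le_pow_of_le_one (by norm_num) (by norm_num)
        omega
      rw [one_mul]
      linarith
    have hc : CauchySeq (fun j => y (j + n)) :=
      cauchySeq_of_le_geometric (1 / 2) 1 (by norm_num) hdist
    obtain ⟨L, hL⟩ := cauchySeq_tendsto_of_complete hc
    exact ⟨L, (tendsto_add_atTop_iff_nat n).mp hL⟩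

end
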